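/- arXiv:2204.11633 — 3 statements merged into one kernel-verified Lean document; each statement's English description precedes it below -/
import Mathlib

section
/- Let H be a complex Hilbert space and let T, S be bounded operators on H with polar decompositions T = U_T|T| and S = U_S|S|, where |T| = (T*T)^{1/2}. For every bounded operator A on H, setting X = TAS and Y = |T|·A·|S*|, one has |X| = U_S*·|Y|·U_S. -/
open ContinuousLinearMap

noncomputable def absOp {H K : Type*} [NormedAddCommGroup H] [InnerProductSpace ℂ H]
    [CompleteSpace H] [NormedAddCommGroup K] [InnerProductSpace ℂ K] [CompleteSpace K]
    (T : H →L[ℂ] K) : H →L[ℂ] H :=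
  CFC.sqrt (ContinuousLinearMap.adjoint T ∘L T)

noncomputable def projCR {H K : Type*} [NormedAddCommGroup H] [InnerProductSpace ℂ H]
    [CompleteSpace H] [NormedAddCommGroup K] [InnerProductSpace ℂ K] [CompleteSpace K]
    (C : K →L[ℂ] H) : H →L[ℂ] H :=
  letI := (LinearMap.range (C : K →ₗ[ℂ] H)).topologicalClosure.isClosed_topologicalClosure.completeSpace_coe
  (LinearMap.range (C : K →ₗ[ℂ] H)).topologicalClosure.subtypeL ∘L
    Submodule.orthogonalProjectionOnto (LinearMap.range (C : K →ₗ[ℂ] H)).topologicalClosure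

/-- `B = U|B|` is the polar decomposition: `U` is a partial isometry (automatic) whose
initial projection `U*U` is the orthogonal projection onto the closure of `range B*`. -/
noncomputable def IsPolarDecomp {H K : Type*} [NormedAddCommGroup H] [InnerProductSpace ℂ H]
    [CompleteSpace H] [NormedAddCommGroup K] [InnerProductSpace ℂ K] [CompleteSpace K]
    (B U : H →L[ℂ] K) : Prop :=
  B = U ∘L absOp B ∧
    ContinuousLinearMap.adjoint U ∘L U = projCR (ContinuousLinearMap.adjoint B)

variable {H : Type*} [NormedAddCommGroup H] [InnerProductSpace ℂ H] [CompleteSpace H]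

set_option maxHeartbeats 1000000
set_option synthInstance.maxHeartbeats 400000

local notation "⟪" x ", " y "⟫_ℂ" => @inner ℂ _ _ x y

section Aux

lemma absOp_nonneg (B : H →L[ℂ] H) : 0 ≤ absOp B := CFC.sqrt_nonneg _

lemma absOp_eq_sqrt (B : H →L[ℂ] H) : absOp B = CFC.sqrt (star B * B) := by
  rw [absOp, mul_def, star_eq_adjoint]

lemma absOp_mul_self (B : H →L[ℂ] H) : absOp B * absOp B = star B * B := by
  rw [absOp_eq_sqrt]
  exact CFC.sqrt_mul_sqrt_self _ (star_mul_self_nonneg B)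

lemma absOp_isSelfAdjoint (B : H →L[ℂ] H) : IsSelfAdjoint (absOp B) :=
  IsSelfAdjoint.of_nonneg (absOp_nonneg B)

lemma norm_absOp_apply (B : H →L[ℂ] H) (y : H) : ‖absOp B y‖ = ‖B y‖ := by
  have h : ⟪absOp B y, absOp B y⟫_ℂ = ⟪B y, B y⟫_ℂ := by
    calc ⟪absOp B y, absOp B y⟫_ℂ
        = ⟪y, absOp B (absOp B y)⟫_ℂ := by
          have h0 := adjoint_inner_left (absOp B) (absOp B y) y
          rw [(absOp_isSelfAdjoint B).adjoint_eq] at h0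
          exact h0
      _ = ⟪y, (star B * B) y⟫_ℂ := by
          rw [← ContinuousLinearMap.comp_apply, ← mul_def, absOp_mul_self]
      _ = ⟪B y, B y⟫_ℂ := by
          rw [mul_def, ContinuousLinearMap.comp_apply, star_eq_adjoint,
            adjoint_inner_right]
  have h2 : ‖absOp B y‖ ^ 2 = ‖B y‖ ^ 2 := by
    rw [norm_sq_eq_re_inner (𝕜 := ℂ), norm_sq_eq_re_inner (𝕜 := ℂ), h]
  exact (sq_eq_sq₀ (norm_nonneg _) (norm_nonneg _)).mp h2

/-- Key absorption lemma: if a selfadjoint `E` fixes the range of `star B`, then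
`absOp B` absorbs `E` on the right. -/
lemma absOp_absorb {B E : H →L[ℂ] H} (hE : IsSelfAdjoint E)
    (hfix : E * star B = star B) : absOp B * E = absOp B := by
  have hBE : B * E = B := by
    have := congrArg star hfix
    rwa [star_mul, star_star, hE.star_eq] at this
  have hz : absOp B * (1 - E) = 0 := by
    ext x
    have h1 : B ((1 - E) x) = 0 := by
      have : (B * (1 - E)) x = (0 : H →L[ℂ] H) x := by
        rw [mul_sub, mul_one, hBE, sub_self]
      simpa [mul_def] using this
    have h2 := norm_absOp_apply B ((1 - E) x)
    rw [h1, norm_zero, norm_eq_zero] at h2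
    simpa [mul_def] using h2
  have h3 : absOp B * E = absOp B - absOp B * (1 - E) := by
    rw [mul_sub, mul_one, sub_sub_cancel]
  rw [h3, hz, sub_zero]

lemma absOp_absorb' {B E : H →L[ℂ] H} (hE : IsSelfAdjoint E)
    (hfix : E * star B = star B) : E * absOp B = absOp B := by
  have h := congrArg star (absOp_absorb hE hfix)
  rwa [star_mul, hE.star_eq, (absOp_isSelfAdjoint B).star_eq] at h

lemma projCR_fix (C : H →L[ℂ] H) : projCR C * C = C := by
  letI := (LinearMap.range (C : H →ₗ[ℂ] H)).topologicalClosure.isClosed_topologicalClosure.completeSpace_coe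
  ext x
  have hmem : C x ∈ (LinearMap.range (C : H →ₗ[ℂ] H)).topologicalClosure :=
    Submodule.le_topologicalClosure _ (LinearMap.mem_range_self (C : H →ₗ[ℂ] H) x)
  simp only [mul_def, projCR, ContinuousLinearMap.comp_apply]
  rw [show Submodule.orthogonalProjectionOnto (LinearMap.range (C : H →ₗ[ℂ] H)).topologicalClosure (C x)
      = (⟨C x, hmem⟩ : (LinearMap.range (C : H →ₗ[ℂ] H)).topologicalClosure) from
    Submodule.orthogonalProjectionOnto_mem_subspace_eq_self ⟨C x, hmem⟩]
  rfl

lemma projCR_isSelfAdjoint (C : H →L[ℂ] H) : IsSelfAdjoint (projCR C) := by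
  letI := (LinearMap.range (C : H →ₗ[ℂ] H)).topologicalClosure.isClosed_topologicalClosure.completeSpace_coe
  exact isSelfAdjoint_starProjection _

end Aux

theorem stmt0 (T S A U_T U_S : H →L[ℂ] H)
    (hT : IsPolarDecomp T U_T) (hS : IsPolarDecomp S U_S) :
    absOp (T ∘L A ∘L S) =
      ContinuousLinearMap.adjoint U_S ∘L
        absOp (absOp T ∘L A ∘L absOp (ContinuousLinearMap.adjoint S)) ∘L U_S := by
  obtain ⟨hS1, hS2⟩ := hS
  -- P := Uₛ* Uₛ is the projection onto the closure of range S*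
  have hP : star U_S * U_S = projCR (ContinuousLinearMap.adjoint S) := by
    rw [star_eq_adjoint, mul_def, hS2]
  have hPsa : IsSelfAdjoint (star U_S * U_S) := by
    rw [hP]; exact projCR_isSelfAdjoint _
  have hPfix : (star U_S * U_S) * star S = star S := by
    rw [hP, star_eq_adjoint]; exact projCR_fix _
  have hsP : absOp S * (star U_S * U_S) = absOp S := absOp_absorb hPsa hPfix
  have hPs : (star U_S * U_S) * absOp S = absOp S := absOp_absorb' hPsa hPfix
  have hS1' : S = U_S * absOp S := by rw [mul_def]; exact hS1
  -- |S*| = Uₛ |S| Uₛ*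
  have habs : absOp (star S) = U_S * absOp S * star U_S := by
    rw [absOp_eq_sqrt, star_star]
    refine CFC.sqrt_unique ?_ (star_right_conjugate_nonneg (absOp_nonneg S) U_S)
    have key : S * star S = U_S * (star S * S) * star U_S := by
      conv_lhs => rw [hS1']
      rw [star_mul, (absOp_isSelfAdjoint S).star_eq, ← absOp_mul_self]
      simp only [mul_assoc]
    rw [key, ← absOp_mul_self]
    calc (U_S * absOp S * star U_S) * (U_S * absOp S * star U_S)
        = U_S * (absOp S * (star U_S * U_S)) * (absOp S * star U_S) := by
          simp only [mul_assoc]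
      _ = U_S * (absOp S * absOp S) * star U_S := by rw [hsP]; simp only [mul_assoc]
  set Z := absOp (star S) with hZ
  -- `S = |S*| Uₛ`
  have hS3 : Z * U_S = S := by
    rw [habs]
    conv_rhs => rw [hS1']
    calc U_S * absOp S * star U_S * U_S = U_S * (absOp S * (star U_S * U_S)) := by
          simp only [mul_assoc]
      _ = U_S * absOp S := by rw [hsP]
  -- Q := Uₛ Uₛ* fixes Z = |S*|
  have hQsa : IsSelfAdjoint (U_S * star U_S) := IsSelfAdjoint.mul_star_self U_S
  have hQabs : (U_S * star U_S) * Z = Z := by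
    rw [habs]
    calc (U_S * star U_S) * (U_S * absOp S * star U_S)
        = U_S * ((star U_S * U_S) * absOp S) * star U_S := by simp only [mul_assoc]
      _ = U_S * absOp S * star U_S := by rw [hPs]
  have hZsa : IsSelfAdjoint Z := absOp_isSelfAdjoint (star S)
  -- Y := |T| A |S*|
  set Y := absOp T * A * Z with hY
  have hstarY : star Y = Z * (star A * absOp T) := by
    rw [hY, star_mul, star_mul, hZsa.star_eq, (absOp_isSelfAdjoint T).star_eq]
  have hQYfix : (U_S * star U_S) * star Y = star Y := by
    rw [hstarY, ← mul_assoc, hQabs]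
  have hYQ : absOp Y * (U_S * star U_S) = absOp Y := absOp_absorb hQsa hQYfix
  -- X := T A S
  set X := T * A * S with hX
  have hXX : star X * X = star U_S * (star Y * Y) * U_S := by
    have h1 : star X = star U_S * (Z * (star A * star T)) := by
      rw [hX, ← hS3, star_mul, star_mul, star_mul, hZsa.star_eq]
      simp only [mul_assoc]
    have h2 : star Y * Y = Z * (star A * ((star T * T) * (A * Z))) := by
      rw [hstarY, hY, ← absOp_mul_self]
      simp only [mul_assoc]
    rw [h1, h2, hX, ← hS3]
    simp only [mul_assoc]
  have hfinal : absOp X = star U_S * absOp Y * U_S := by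
    rw [absOp_eq_sqrt]
    refine CFC.sqrt_unique ?_ (star_left_conjugate_nonneg (absOp_nonneg Y) U_S)
    calc (star U_S * absOp Y * U_S) * (star U_S * absOp Y * U_S)
        = star U_S * (absOp Y * (U_S * star U_S)) * (absOp Y * U_S) := by
          simp only [mul_assoc]
      _ = star U_S * (absOp Y * absOp Y) * U_S := by rw [hYQ]; simp only [mul_assoc]
      _ = star U_S * (star Y * Y) * U_S := by rw [absOp_mul_self]
      _ = star X * X := hXX.symm
  have e1 : T ∘L A ∘L S = X := by ext x; simp [hX, mul_def]
  have e2 : absOp T ∘L A ∘L absOp (ContinuousLinearMap.adjoint S) = Y := by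
    ext x; simp [hY, hZ, mul_def, ← star_eq_adjoint]
  rw [e1, e2, hfinal, ← star_eq_adjoint]
  ext x; simp [mul_def]
end

section
/- Let H be a complex Hilbert space and T, A bounded operators on H with polar decompositions T = U_T|T| and A = U_A|A|, such that A commutes with |T|. Then AT = TA if and only if A U_T = U_T A. -/
open ContinuousLinearMap

variable {H : Type*} [NormedAddCommGroup H] [InnerProductSpace ℂ H] [CompleteSpace H]

set_option maxHeartbeats 1000000 in
set_option synthInstance.maxHeartbeats 400000 in
theorem stmt13 (T A U_T U_A : H →L[ℂ] H)
    (hT : IsPolarDecomp T U_T) (hA : IsPolarDecomp A U_A)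
    (hc : A ∘L absOp T = absOp T ∘L A) :
    A ∘L T = T ∘L A ↔ A ∘L U_T = U_T ∘L A := by
  obtain ⟨hTe, hU⟩ := hT
  set S : H →L[ℂ] H := absOp T with hSdef
  set K : Submodule ℂ H :=
    (LinearMap.range (ContinuousLinearMap.adjoint T : H →ₗ[ℂ] H)).topologicalClosure with hKdef
  letI : CompleteSpace K :=
    (LinearMap.range (ContinuousLinearMap.adjoint T : H →ₗ[ℂ] H)).isClosed_topologicalClosure.completeSpace_coe
  -- basic facts about S
  have hpos : (0 : H →L[ℂ] H) ≤ ContinuousLinearMap.adjoint T ∘L T := by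
    have := star_mul_self_nonneg T
    rwa [ContinuousLinearMap.mul_def, ContinuousLinearMap.star_eq_adjoint] at this
  have hSa : IsSelfAdjoint S := IsSelfAdjoint.of_nonneg (CFC.sqrt_nonneg _)
  have hSadj : ContinuousLinearMap.adjoint S = S := by
    rw [← ContinuousLinearMap.star_eq_adjoint]; exact hSa
  have hSS : S ∘L S = ContinuousLinearMap.adjoint T ∘L T := by
    simpa [hSdef, absOp, mul_def] using CFC.sqrt_mul_sqrt_self _ hpos
  -- ⟪S x, S x⟫ = ⟪T x, T x⟫
  have hinner : ∀ x : H, (inner ℂ (S x) (S x) : ℂ) = inner ℂ (T x) (T x) := by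
    intro x
    have h1 : (inner ℂ (S x) (S x) : ℂ) = inner ℂ (S (S x)) x :=
      ((ContinuousLinearMap.isSelfAdjoint_iff_isSymmetric.mp hSa) (S x) x).symm
    have h2 : S (S x) = ContinuousLinearMap.adjoint T (T x) := by
      have := congrArg (fun f : H →L[ℂ] H => f x) hSS
      simpa using this
    rw [h1, h2, ContinuousLinearMap.adjoint_inner_left]
  have hker : ∀ x : H, S x = 0 ↔ T x = 0 := by
    intro x
    rw [← inner_self_eq_zero (𝕜 := ℂ) (x := S x), ← inner_self_eq_zero (𝕜 := ℂ) (x := T x),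
      hinner]
  -- T x = 0 → x ∈ Kᗮ
  have hTK : ∀ x : H, T x = 0 → x ∈ Kᗮ := by
    intro x hx
    rw [Submodule.mem_orthogonal']
    intro u hu
    have hle : LinearMap.range (ContinuousLinearMap.adjoint T : H →ₗ[ℂ] H) ≤
        LinearMap.ker (innerSL ℂ x : H →ₗ[ℂ] ℂ) := by
      rintro _ ⟨z, rfl⟩
      simp only [LinearMap.mem_ker, ContinuousLinearMap.coe_coe, innerSL_apply_apply]
      rw [← ContinuousLinearMap.adjoint_inner_left, adjoint_adjoint, hx, inner_zero_left]
    have := Submodule.topologicalClosure_minimal _ hle (isClosed_ker (innerSL ℂ x))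
    simpa using this hu
  -- x ∈ Kᗮ → T x = 0
  have hKT : ∀ x : H, x ∈ Kᗮ → T x = 0 := by
    intro x hx
    have hmem : ContinuousLinearMap.adjoint T (T x) ∈ K :=
      Submodule.le_topologicalClosure _ ⟨T x, rfl⟩
    have h0 : (inner ℂ (T x) (T x) : ℂ) = 0 := by
      rw [← ContinuousLinearMap.adjoint_inner_left]
      exact (Submodule.mem_orthogonal K x).mp hx _ hmem
    exact inner_self_eq_zero.mp h0
  -- x ∈ Kᗮ → U_T x = 0
  have hKU : ∀ x : H, x ∈ Kᗮ → U_T x = 0 := by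
    intro x hx
    have hproj : (ContinuousLinearMap.adjoint U_T ∘L U_T) x = 0 := by
      rw [hU]
      show (K.subtypeL ∘L Submodule.orthogonalProjectionOnto K) x = 0
      simp [Submodule.orthogonalProjectionOnto_apply_of_mem_orthogonal hx]
    have h0 : (inner ℂ (U_T x) (U_T x) : ℂ) = 0 := by
      rw [← ContinuousLinearMap.adjoint_inner_left]
      simpa using congrArg (fun y => (inner ℂ y x : ℂ)) hproj
    exact inner_self_eq_zero.mp h0
  constructor
  · -- AT = TA → A U_T = U_T A
    intro h
    -- (A U_T - U_T A) vanishes on range S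
    have hD0 : ∀ y : H, A (U_T (S y)) = U_T (A (S y)) := by
      intro y
      have h1 : A (U_T (S y)) = A (T y) := by rw [hTe]; rfl
      have h2 : A (T y) = T (A y) := congrArg (fun f : H →L[ℂ] H => f y) h
      have h3 : A (S y) = S (A y) := congrArg (fun f : H →L[ℂ] H => f y) hc
      rw [h1, h2, h3, hTe]; rfl
    -- vanishes on K
    have hDK : ∀ x ∈ K, A (U_T x) = U_T (A x) := by
      intro x hx
      have hle : LinearMap.range (ContinuousLinearMap.adjoint T : H →ₗ[ℂ] H) ≤
          LinearMap.ker ((A ∘L U_T - U_T ∘L A : H →L[ℂ] H) : H →ₗ[ℂ] H) := by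
        rintro _ ⟨z, rfl⟩
        have hadj : ContinuousLinearMap.adjoint T z =
            S (ContinuousLinearMap.adjoint U_T z) := by
          rw [hTe, adjoint_comp, hSadj]; rfl
        simp only [LinearMap.mem_ker, ContinuousLinearMap.coe_coe, sub_apply, comp_apply]
        rw [hadj, hD0, sub_self]
      have := Submodule.topologicalClosure_minimal _ hle
        (isClosed_ker (A ∘L U_T - U_T ∘L A)) hx
      simpa [sub_eq_zero] using this
    ext x
    obtain ⟨y, hy, z, hz, rfl⟩ := K.exists_add_mem_mem_orthogonal x
    have hSz : S z = 0 := (hker z).mpr (hKT z hz)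
    have hSAz : S (A z) = 0 := by
      have : A (S z) = S (A z) := congrArg (fun f : H →L[ℂ] H => f z) hc
      rw [← this, hSz, map_zero]
    have hAz : U_T (A z) = 0 := hKU _ (hTK _ ((hker _).mp hSAz))
    have hUz : U_T z = 0 := hKU z hz
    simp only [comp_apply, map_add]
    simp [hDK y hy, hUz, hAz]
  · -- A U_T = U_T A → AT = TA
    intro h
    calc A ∘L T = (A ∘L U_T) ∘L S := by rw [hTe, comp_assoc]
    _ = U_T ∘L (A ∘L S) := by rw [h, comp_assoc]
    _ = U_T ∘L (S ∘L A) := by rw [hc]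
    _ = T ∘L A := by rw [hTe, comp_assoc]
end

section
/- Let H be a complex Hilbert space and let T, A be bounded operators with polar decompositions T = U_T|T|, A = U_A|A|, such that |T| commutes with A and |T*| commutes with |A|. If |T|^α·|A|·|T*|^β is positive for some reals α, β > 0, then |T|^{α'}·|A|·|T*|^{β'} is positive for all reals α', β' > 0. -/
open ContinuousLinearMap

set_option maxHeartbeats 1000000
set_option synthInstance.maxHeartbeats 400000
set_option linter.unusedSectionVars false
set_option linter.unusedVariables false

open scoped NNReal
open Filter

section RealAux

private lemma rpow_unif_aux (M s ε : ℝ) (hs : 0 < s) (hε : 0 < ε) :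
    ∃ δ > 0, ∀ t : ℝ, s ≤ t → t ≤ s + δ → ∀ x : ℝ, 0 ≤ x → x ≤ M → |x ^ t - x ^ s| < ε := by
  set K : Set (ℝ × ℝ) := Set.Icc s (s + 1) ×ˢ Set.Icc 0 (max M 0) with hKdef
  have hK : IsCompact K := isCompact_Icc.prod isCompact_Icc
  have hf : ContinuousOn (fun p : ℝ × ℝ => p.2 ^ p.1) K := by
    intro p hp
    have hp1 : 0 < p.1 := lt_of_lt_of_le hs hp.1.1
    have hc : ContinuousAt (fun q : ℝ × ℝ => q.1 ^ q.2) (Prod.swap p) :=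
      Real.continuousAt_rpow (p.2, p.1) (Or.inr hp1)
    have h2 : ContinuousAt ((fun q : ℝ × ℝ => q.1 ^ q.2) ∘ Prod.swap) p :=
      ContinuousAt.comp (f := Prod.swap) hc continuous_swap.continuousAt
    exact h2.continuousWithinAt
  have huc := hK.uniformContinuousOn_of_continuous hf
  rw [Metric.uniformContinuousOn_iff] at huc
  obtain ⟨δ, hδ, hd⟩ := huc ε hε
  refine ⟨min δ 1 / 2, by positivity, fun t ht1 ht2 x hx hxM => ?_⟩
  have hmδ : min δ 1 ≤ δ := min_le_left δ 1
  have hm1 : min δ 1 ≤ 1 := min_le_right δ 1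
  have hxK : x ∈ Set.Icc (0:ℝ) (max M 0) := ⟨hx, le_max_of_le_left hxM⟩
  have htK : (t, x) ∈ K := ⟨⟨ht1, by linarith⟩, hxK⟩
  have hsK : (s, x) ∈ K := ⟨⟨le_refl s, by linarith⟩, hxK⟩
  have hdist : dist (t, x) (s, x) < δ := by
    rw [Prod.dist_eq]
    simp only [dist_self]
    rw [Real.dist_eq, abs_of_nonneg (by linarith : (0:ℝ) ≤ t - s)]
    rw [max_eq_left (by linarith : (0:ℝ) ≤ t - s)]
    linarith
  have := hd (t, x) htK (s, x) hsK hdist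
  rwa [Real.dist_eq] at this

end RealAux

section Helpers

variable {A : Type*} [CStarAlgebra A] [PartialOrder A] [StarOrderedRing A]

private lemma isClosed_centralizer_star (b : A) :
    IsClosed ((StarSubalgebra.centralizer ℂ {b} : StarSubalgebra ℂ A) : Set A) := by
  rw [StarSubalgebra.coe_centralizer]
  have : (({b} ∪ star {b} : Set A)).centralizer =
      ⋂ m ∈ ({b} ∪ star {b} : Set A), {x : A | m * x = x * m} := by
    ext x; simp [Set.mem_centralizer_iff]
  rw [this]
  exact isClosed_biInter fun m _ =>
    isClosed_eq (continuous_const.mul continuous_id) (continuous_id.mul continuous_const)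

private lemma commute_cfc_complex {a b : A} (hb : IsSelfAdjoint b) (hab : Commute a b)
    (f : ℂ → ℂ) : Commute b (cfc f a) := by
  by_cases hn : IsStarNormal a
  · by_cases hf : ContinuousOn f (spectrum ℂ a)
    · have hmem : cfc f a ∈ StarAlgebra.elemental ℂ a := by
        rw [cfc_apply f a hn hf, cfcHom_eq_of_isStarNormal]
        exact SetLike.coe_mem _
      have hle : StarAlgebra.elemental ℂ a ≤ StarSubalgebra.centralizer ℂ {b} := by
        apply StarAlgebra.elemental.le_of_mem (isClosed_centralizer_star b)
        rw [StarSubalgebra.mem_centralizer_iff]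
        rintro g rfl
        exact ⟨hab.symm.eq, by rw [hb.star_eq]; exact hab.symm.eq⟩
      have hmem2 := hle hmem
      rw [StarSubalgebra.mem_centralizer_iff] at hmem2
      exact (hmem2 b rfl).1
    · rw [cfc_apply_of_not_continuousOn a hf]
      exact Commute.zero_right b
  · rw [cfc_apply_of_not_predicate a hn]
    exact Commute.zero_right b

private lemma commute_cfc_real {a b : A} (ha : IsSelfAdjoint a) (hb : IsSelfAdjoint b)
    (hab : Commute a b) (f : ℝ → ℝ) : Commute b (cfc f a) := by
  rw [cfc_real_eq_complex f ha]
  exact commute_cfc_complex hb hab _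

private lemma commute_cfc_nnreal {a b : A} (ha : 0 ≤ a) (hb : IsSelfAdjoint b)
    (hab : Commute a b) (f : ℝ≥0 → ℝ≥0) : Commute b (cfc f a) := by
  rw [cfc_nnreal_eq_real f a ha]
  exact commute_cfc_real (.of_nonneg ha) hb hab _

private lemma commute_sqrt {a b : A} (ha : 0 ≤ a) (hb : IsSelfAdjoint b)
    (hab : Commute a b) : Commute b (CFC.sqrt a) := by
  rw [CFC.sqrt_eq_cfc]
  exact commute_cfc_nnreal ha hb hab _

private lemma commute_rpow {a b : A} (ha : 0 ≤ a) (hb : IsSelfAdjoint b)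
    (hab : Commute a b) (t : ℝ) : Commute b (CFC.rpow a t) :=
  commute_cfc_nnreal ha hb hab _

private lemma mul_nonneg_of_commute' {a b : A} (ha : 0 ≤ a) (hb : 0 ≤ b)
    (hab : Commute a b) : 0 ≤ a * b := by
  have h1 : Commute (CFC.sqrt a) b := (commute_sqrt ha (IsSelfAdjoint.of_nonneg hb) hab).symm
  have h2 : a * b = star (CFC.sqrt a) * b * CFC.sqrt a := by
    rw [(IsSelfAdjoint.of_nonneg (CFC.sqrt_nonneg (a := a))).star_eq]
    calc a * b = CFC.sqrt a * CFC.sqrt a * b := by rw [CFC.sqrt_mul_sqrt_self a ha]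
    _ = CFC.sqrt a * (CFC.sqrt a * b) := by rw [mul_assoc]
    _ = CFC.sqrt a * (b * CFC.sqrt a) := by rw [h1.eq]
    _ = CFC.sqrt a * b * CFC.sqrt a := by rw [mul_assoc]
  rw [h2]
  exact star_left_conjugate_nonneg hb _

private lemma rpow_eq_cfc_real {a : A} (ha : 0 ≤ a) (t : ℝ) :
    CFC.rpow a t = cfc (fun x : ℝ => x ^ t) a := by
  rw [show CFC.rpow a t = cfc (fun x : ℝ≥0 => x ^ t) a from rfl, cfc_nnreal_eq_real _ a ha]
  apply cfc_congr
  intro x hx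
  have hx0 : (0:ℝ) ≤ x := spectrum_nonneg_of_nonneg ha hx
  simp [NNReal.coe_rpow, Real.coe_toNNReal x hx0]

private lemma rpow_add_of_pos {a : A} (ha : 0 ≤ a) {s t : ℝ} (hs : 0 < s) (ht : 0 < t) :
    CFC.rpow a (s + t) = CFC.rpow a s * CFC.rpow a t := by
  simp only [show ∀ y : ℝ, CFC.rpow a y = cfc (fun x : ℝ≥0 => x ^ y) a from fun _ => rfl]
  rw [← cfc_mul _ _ a (NNReal.continuous_rpow_const hs.le).continuousOn
    (NNReal.continuous_rpow_const ht.le).continuousOn]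
  apply cfc_congr
  intro x _
  exact x.rpow_add' (by positivity)

private lemma sqrt_rpow_half {a : A} (ha : 0 ≤ a) {s : ℝ} (hs : 0 < s) :
    CFC.sqrt (CFC.rpow a s) = CFC.rpow a (s / 2) := by
  apply CFC.sqrt_unique
  · rw [← rpow_add_of_pos ha (by positivity) (by positivity)]
    norm_num
  · exact CFC.rpow_nonneg

private lemma sqrt_mul_of_commute {a b : A} (ha : 0 ≤ a) (hb : 0 ≤ b) (hab : Commute a b) :
    CFC.sqrt (a * b) = CFC.sqrt a * CFC.sqrt b := by
  have hsb : Commute (CFC.sqrt a) b := (commute_sqrt ha (IsSelfAdjoint.of_nonneg hb) hab).symm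
  have hss : Commute (CFC.sqrt a) (CFC.sqrt b) :=
    commute_sqrt hb (IsSelfAdjoint.of_nonneg (CFC.sqrt_nonneg (a := a))) hsb.symm
  refine CFC.sqrt_unique ?_ (mul_nonneg_of_commute' (CFC.sqrt_nonneg _) (CFC.sqrt_nonneg _) hss)
  calc CFC.sqrt a * CFC.sqrt b * (CFC.sqrt a * CFC.sqrt b)
      = CFC.sqrt a * (CFC.sqrt b * CFC.sqrt a) * CFC.sqrt b := by noncomm_ring
    _ = CFC.sqrt a * (CFC.sqrt a * CFC.sqrt b) * CFC.sqrt b := by rw [hss.eq]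
    _ = (CFC.sqrt a * CFC.sqrt a) * (CFC.sqrt b * CFC.sqrt b) := by noncomm_ring
    _ = a * b := by rw [CFC.sqrt_mul_sqrt_self a ha, CFC.sqrt_mul_sqrt_self b hb]

private lemma commute_of_tendsto {X : ℕ → A} {Y Z : A} (h : ∀ n, Commute (X n) Z)
    (hX : Tendsto X atTop (nhds Y)) : Commute Y Z := by
  have h1 : Tendsto (fun n => X n * Z) atTop (nhds (Y * Z)) := hX.mul tendsto_const_nhds
  have h2 : Tendsto (fun n => X n * Z) atTop (nhds (Z * Y)) := by
    simp only [fun n => (h n).eq]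
    exact tendsto_const_nhds.mul hX
  exact tendsto_nhds_unique h1 h2

private lemma continuousOn_rpow_spectrum (a : A) (t : ℝ) (ht : 0 < t) :
    ContinuousOn (fun x : ℝ => x ^ t) (spectrum ℝ a) := fun x _ =>
  (Real.continuousAt_rpow_const x t (Or.inr ht.le)).continuousWithinAt

private lemma tendsto_rpow_exponent {a : A} (ha : 0 ≤ a) {s : ℝ} (hs : 0 < s)
    {u : ℕ → ℝ} (hu : ∀ n, s ≤ u n) (hlim : Tendsto u atTop (nhds s)) :
    Tendsto (fun n => CFC.rpow a (u n)) atTop (nhds (CFC.rpow a s)) := by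
  rw [NormedAddCommGroup.tendsto_atTop]
  intro ε hε
  obtain ⟨δ, hδ, hbound⟩ := rpow_unif_aux (‖a‖ * ‖(1 : A)‖) s (ε / 2) hs (by positivity)
  obtain ⟨N, hN⟩ := Metric.tendsto_atTop.mp hlim δ hδ
  refine ⟨N, fun n hn => ?_⟩
  have h1 : u n ≤ s + δ := by
    have := hN n hn
    rw [Real.dist_eq] at this
    have := (abs_lt.mp this).2
    linarith
  have key : ‖CFC.rpow a (u n) - CFC.rpow a s‖ ≤ ε / 2 := by
    rw [rpow_eq_cfc_real ha (u n), rpow_eq_cfc_real ha s,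
      ← cfc_sub _ _ a (continuousOn_rpow_spectrum a (u n) (lt_of_lt_of_le hs (hu n)))
        (continuousOn_rpow_spectrum a s hs)]
    apply norm_cfc_le (by positivity)
    intro x hx
    have hx0 : (0:ℝ) ≤ x := spectrum_nonneg_of_nonneg ha hx
    have hxM : x ≤ ‖a‖ * ‖(1 : A)‖ := by
      have := spectrum.norm_le_norm_mul_of_mem hx
      rw [Real.norm_eq_abs] at this
      linarith [le_abs_self x]
    rw [Real.norm_eq_abs]
    exact (hbound (u n) (hu n) h1 x hx0 hxM).le
  linarith

end Helpers

variable {H : Type*} [NormedAddCommGroup H] [InnerProductSpace ℂ H] [CompleteSpace H]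

theorem stmt17 (T A U_T U_A : H →L[ℂ] H)
    (hT : IsPolarDecomp T U_T) (hA : IsPolarDecomp A U_A)
    (hc1 : absOp T ∘L A = A ∘L absOp T)
    (hc2 : absOp (ContinuousLinearMap.adjoint T) ∘L absOp A =
      absOp A ∘L absOp (ContinuousLinearMap.adjoint T))
    (α β : ℝ) (hα : 0 < α) (hβ : 0 < β)
    (h : (CFC.rpow (absOp T) α ∘L absOp A ∘L
      CFC.rpow (absOp (ContinuousLinearMap.adjoint T)) β).IsPositive) :
    ∀ α' β' : ℝ, 0 < α' → 0 < β' →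
      (CFC.rpow (absOp T) α' ∘L absOp A ∘L
        CFC.rpow (absOp (ContinuousLinearMap.adjoint T)) β').IsPositive := by
  intro α' β' hα' hβ'
  set P : H →L[ℂ] H := absOp T with hPdef
  set Q : H →L[ℂ] H := absOp (ContinuousLinearMap.adjoint T) with hQdef
  set Bb : H →L[ℂ] H := absOp A with hBdef
  have hP : 0 ≤ P := CFC.sqrt_nonneg _
  have hrP : ∀ s : ℝ, 0 ≤ CFC.rpow P s := fun _ => CFC.rpow_nonneg
  have hQ : 0 ≤ Q := CFC.sqrt_nonneg _
  have hBnn : 0 ≤ Bb := CFC.sqrt_nonneg _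
  have hPsa : IsSelfAdjoint P := .of_nonneg hP
  have hBsa : IsSelfAdjoint Bb := .of_nonneg hBnn
  have hc1' : Commute P A := hc1
  have hc2' : Commute Q Bb := hc2
  have hPA' : Commute P (star A) := by
    have h1 := congrArg star hc1'.eq
    rw [star_mul, star_mul, hPsa.star_eq] at h1
    exact h1.symm
  have hBb_eq : Bb = CFC.sqrt (star A * A) := by
    rw [hBdef]
    unfold absOp
    rw [← ContinuousLinearMap.mul_def, ← ContinuousLinearMap.star_eq_adjoint]
  have hPB : Commute P Bb := by
    rw [hBb_eq]
    exact commute_sqrt (star_mul_self_nonneg A) hPsa (hPA'.mul_right hc1').symm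
  set S : H →L[ℂ] H := CFC.rpow Q β with hSdef
  have hS : 0 ≤ S := CFC.rpow_nonneg
  have hSsa : IsSelfAdjoint S := .of_nonneg hS
  have hBS : Commute Bb S := commute_rpow hQ hBsa hc2' β
  have hPsB : ∀ s : ℝ, Commute (CFC.rpow P s) Bb :=
    fun s => (commute_rpow hP hBsa hPB s).symm
  have hX : 0 ≤ CFC.rpow P α * (Bb * S) := by
    rw [ContinuousLinearMap.mul_def, ContinuousLinearMap.mul_def]
    exact (ContinuousLinearMap.nonneg_iff_isPositive _).mpr h
  have hXsa := (IsSelfAdjoint.of_nonneg hX).star_eq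
  have hPαsa : star (CFC.rpow P α) = CFC.rpow P α :=
    (IsSelfAdjoint.of_nonneg (hrP α)).star_eq
  rw [star_mul, star_mul, hSsa.star_eq, hBsa.star_eq, hPαsa] at hXsa
  have hCS : Commute (CFC.rpow P α * Bb) S := by
    show _ = _
    calc (CFC.rpow P α * Bb) * S = CFC.rpow P α * (Bb * S) := by rw [mul_assoc]
      _ = S * Bb * CFC.rpow P α := hXsa.symm
      _ = S * (Bb * CFC.rpow P α) := by rw [mul_assoc]
      _ = S * (CFC.rpow P α * Bb) := by rw [(hPsB α).symm.eq]
  have key_half : ∀ s : ℝ, 0 < s → Commute (CFC.rpow P s * Bb) S →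
      Commute (CFC.rpow P (s / 2) * Bb) S := by
    intro s hs hzs
    have hGnn : 0 ≤ CFC.rpow P s * Bb :=
      mul_nonneg_of_commute' (hrP s) hBnn (hPsB s)
    have h1 : Commute S (CFC.sqrt (CFC.rpow P s * Bb)) := commute_sqrt hGnn hSsa hzs
    rw [sqrt_mul_of_commute (hrP s) hBnn (hPsB s), sqrt_rpow_half hP hs] at h1
    have h4 := h1.mul_right (commute_sqrt hBnn hSsa hBS)
    rw [mul_assoc, CFC.sqrt_mul_sqrt_self Bb hBnn] at h4
    exact h4.symm
  have key_add : ∀ s t : ℝ, 0 < s → 0 < t → Commute (CFC.rpow P s * Bb) S →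
      Commute (CFC.rpow P t * Bb) S → Commute (CFC.rpow P (s + t) * Bb) S := by
    intro s t hs ht hzs hzt
    have hσ : ∀ x ∈ spectrum ℝ Bb, (0:ℝ) ≤ x :=
      fun x hx => spectrum_nonneg_of_nonneg hBnn hx
    have hCBB : (CFC.rpow P s * Bb) * (CFC.rpow P t * Bb) =
        CFC.rpow P (s + t) * (Bb * Bb) := by
      calc (CFC.rpow P s * Bb) * (CFC.rpow P t * Bb)
          = CFC.rpow P s * (Bb * CFC.rpow P t) * Bb := by noncomm_ring
        _ = CFC.rpow P s * (CFC.rpow P t * Bb) * Bb := by rw [(hPsB t).symm.eq]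
        _ = (CFC.rpow P s * CFC.rpow P t) * (Bb * Bb) := by noncomm_ring
        _ = CFC.rpow P (s + t) * (Bb * Bb) := by rw [← rpow_add_of_pos hP hs ht]
    have hcont : ∀ n : ℕ, ContinuousOn (fun x : ℝ => (x + 1 / (n + 1 : ℝ))⁻¹)
        (spectrum ℝ Bb) := by
      intro n
      apply ContinuousOn.inv₀ (by fun_prop)
      intro x hx
      have := hσ x hx
      positivity
    have heq : ∀ n : ℕ, ((CFC.rpow P s * Bb) * (CFC.rpow P t * Bb)) *
        cfc (fun x : ℝ => (x + 1 / (n + 1 : ℝ))⁻¹) Bb =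
        CFC.rpow P (s + t) * cfc (fun x : ℝ => x * x * (x + 1 / (n + 1 : ℝ))⁻¹) Bb := by
      intro n
      rw [hCBB, mul_assoc]
      congr 1
      symm
      calc cfc (fun x : ℝ => x * x * (x + 1 / (n + 1 : ℝ))⁻¹) Bb
          = cfc (fun x : ℝ => x * x) Bb * cfc (fun x : ℝ => (x + 1 / (n + 1 : ℝ))⁻¹) Bb := by
            rw [← cfc_mul _ _ Bb (by fun_prop) (hcont n)]
        _ = (cfc (fun x : ℝ => x) Bb * cfc (fun x : ℝ => x) Bb) *
            cfc (fun x : ℝ => (x + 1 / (n + 1 : ℝ))⁻¹) Bb := by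
            rw [← cfc_mul (fun x : ℝ => x) (fun x : ℝ => x) Bb (by fun_prop) (by fun_prop)]
        _ = Bb * Bb * cfc (fun x : ℝ => (x + 1 / (n + 1 : ℝ))⁻¹) Bb := by
            rw [cfc_id' ℝ Bb hBsa]
    apply commute_of_tendsto (X := fun n => ((CFC.rpow P s * Bb) * (CFC.rpow P t * Bb)) *
      cfc (fun x : ℝ => (x + 1 / (n + 1 : ℝ))⁻¹) Bb) (Z := S)
    · intro n
      exact (hzs.mul_left hzt).mul_left ((commute_cfc_real hBsa hSsa hBS _).symm) |>.symm |>.symm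
    · rw [tendsto_iff_norm_sub_tendsto_zero]
      apply squeeze_zero_norm (a := fun n : ℕ => ‖CFC.rpow P (s + t)‖ * (1 / (n + 1 : ℝ)))
      · intro n
        rw [heq n]
        have hsub : CFC.rpow P (s + t) * cfc (fun x : ℝ => x * x * (x + 1 / (n + 1 : ℝ))⁻¹) Bb -
            CFC.rpow P (s + t) * Bb = CFC.rpow P (s + t) *
            (cfc (fun x : ℝ => x * x * (x + 1 / (n + 1 : ℝ))⁻¹) Bb - Bb) := by
          rw [mul_sub]
        rw [hsub, norm_norm]
        refine le_trans (norm_mul_le _ _) ?_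
        refine mul_le_mul_of_nonneg_left ?_ (norm_nonneg _)
        have hId : Bb = cfc (fun x : ℝ => x) Bb := (cfc_id' ℝ Bb hBsa).symm
        nth_rewrite 2 [hId]
        rw [← cfc_sub _ _ Bb (by exact (continuousOn_id.mul continuousOn_id).mul (hcont n))
          (by fun_prop)]
        apply norm_cfc_le (by positivity)
        intro x hx
        have hx0 := hσ x hx
        have hδpos : (0:ℝ) < 1 / (n + 1 : ℝ) := by positivity
        have hxδ : 0 < x + 1 / (n + 1 : ℝ) := by linarith
        rw [Real.norm_eq_abs]
        have hrw : x * x * (x + 1 / (n + 1 : ℝ))⁻¹ - x =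
            -(x * (1 / (n + 1 : ℝ))) * (x + 1 / (n + 1 : ℝ))⁻¹ := by
          field_simp
          ring
        rw [hrw, neg_mul, abs_neg, abs_of_nonneg (by positivity)]
        rw [mul_inv_le_iff₀ hxδ]
        nlinarith
      · have := tendsto_one_div_add_atTop_nhds_zero_nat.const_mul ‖CFC.rpow P (s + t)‖
        simpa using this
  have key_dyadic : ∀ n : ℕ, Commute (CFC.rpow P (α / 2 ^ n) * Bb) S := by
    intro n
    induction n with
    | zero => simpa using hCS
    | succ n ih =>
        have := key_half _ (by positivity) ih
        rwa [show α / 2 ^ n / 2 = α / 2 ^ (n + 1) by rw [pow_succ]; ring] at this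
  have key_nat : ∀ (k n : ℕ), Commute (CFC.rpow P (((k : ℝ) + 1) * (α / 2 ^ n)) * Bb) S := by
    intro k n
    induction k with
    | zero => simpa using key_dyadic n
    | succ k ih =>
        have := key_add _ _ (by positivity) (by positivity) ih (key_dyadic n)
        rwa [show ((k : ℝ) + 1) * (α / 2 ^ n) + α / 2 ^ n =
          (((k + 1 : ℕ) : ℝ) + 1) * (α / 2 ^ n) by push_cast; ring] at this
  set u : ℕ → ℝ := fun n => ((⌈α' * 2 ^ n / α⌉₊ : ℕ) : ℝ) * (α / 2 ^ n) with hudef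
  have hu1 : ∀ n, α' ≤ u n := by
    intro n
    have h0 : α' = (α' * 2 ^ n / α) * (α / 2 ^ n) := by
      field_simp
    rw [h0, hudef]
    exact mul_le_mul_of_nonneg_right (Nat.le_ceil _) (by positivity)
  have hZu : ∀ n, Commute (CFC.rpow P (u n) * Bb) S := by
    intro n
    obtain ⟨k, hk⟩ : ∃ k, ⌈α' * 2 ^ n / α⌉₊ = k + 1 :=
      ⟨⌈α' * 2 ^ n / α⌉₊ - 1, (Nat.succ_pred_eq_of_pos (Nat.ceil_pos.mpr (by positivity))).symm⟩
    have hkey := key_nat k n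
    rw [show ((k : ℝ) + 1) = ((⌈α' * 2 ^ n / α⌉₊ : ℕ) : ℝ) by rw [hk]; push_cast; ring] at hkey
    exact hkey
  have htend : Tendsto u atTop (nhds α') := by
    rw [tendsto_iff_norm_sub_tendsto_zero]
    apply squeeze_zero_norm (a := fun n : ℕ => α * (1 / 2 : ℝ) ^ n)
    · intro n
      have h1 : α' ≤ u n := hu1 n
      have h2 : u n ≤ α' + α / 2 ^ n := by
        have hceil : (⌈α' * 2 ^ n / α⌉₊ : ℝ) < α' * 2 ^ n / α + 1 :=
          Nat.ceil_lt_add_one (by positivity)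
        have := mul_le_mul_of_nonneg_right hceil.le
          (show (0:ℝ) ≤ α / 2 ^ n by positivity)
        rw [hudef]
        refine le_trans this (le_of_eq ?_)
        field_simp
        try ring
      rw [norm_norm, Real.norm_eq_abs, abs_of_nonneg (by linarith)]
      have : α * (1 / 2 : ℝ) ^ n = α / 2 ^ n := by
        rw [div_pow]
        ring
      rw [this]
      linarith
    · have := (tendsto_pow_atTop_nhds_zero_of_lt_one (by norm_num : (0:ℝ) ≤ 1/2)
        (by norm_num : (1/2 : ℝ) < 1)).const_mul α
      simpa using this
  have hZα' : Commute (CFC.rpow P α' * Bb) S :=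
    commute_of_tendsto hZu ((tendsto_rpow_exponent hP hα' hu1 htend).mul tendsto_const_nhds)
  have hCnn : 0 ≤ CFC.rpow P α' * Bb :=
    mul_nonneg_of_commute' (hrP α') hBnn (hPsB α')
  have hQβ' : CFC.rpow Q β' = CFC.rpow S (β' / β) := by
    have h2 := CFC.rpow_rpow_of_exponent_nonneg Q β (β' / β) hβ.le (by positivity) hQ
    rw [show β * (β' / β) = β' from by field_simp] at h2
    exact h2.symm
  have hcomm : Commute (CFC.rpow P α' * Bb) (CFC.rpow Q β') := by
    rw [hQβ']
    exact commute_rpow hS (IsSelfAdjoint.of_nonneg hCnn) hZα'.symm (β' / β)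
  have htot : 0 ≤ (CFC.rpow P α' * Bb) * CFC.rpow Q β' :=
    mul_nonneg_of_commute' hCnn (show 0 ≤ CFC.rpow Q β' from CFC.rpow_nonneg) hcomm
  rw [← ContinuousLinearMap.nonneg_iff_isPositive]
  have hfin : CFC.rpow P α' ∘L (Bb ∘L CFC.rpow Q β') =
      (CFC.rpow P α' * Bb) * CFC.rpow Q β' := by
    rw [← ContinuousLinearMap.mul_def, ← ContinuousLinearMap.mul_def, mul_assoc]
  rw [hfin]
  exact htot
end
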